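/- arXiv:1403.6559 — 7 statements merged into one kernel-verified Lean document; each statement's English description precedes it below -/
import Mathlib

section
/- Let (σ, σ_p) have dominating point spectrum with witness R > 0. Then there is no sequence (λ_n)_{n∈ℕ} of eigenvalues λ_n ∈ σ_p such that the moduli |λ_n| are strictly increasing (|λ_n| < |λ_{n+1}| for all n) and lim_{n→∞} |λ_n| = r for some real r > R. -/
/-- The peripheral spectrum of a set `S ⊆ ℂ`: the points of `S` whose modulus equals
the supremum of the moduli of elements of `S`. -/
def peripheralSpectrum (S : Set ℂ) : Set ℂ :=
  {z | z ∈ S ∧ ‖z‖ = ⨆ w : S, ‖(w : ℂ)‖}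

/-- `(σ, σp)` has dominating point spectrum with witness `R > 0`:
`σ \ D_R` is nonempty and for every `r > R`, (i) if `σ ∩ D_r ∩ σp ≠ ∅` then the
peripheral spectrum of `σ ∩ D_r` is nonempty, and (ii) `σ \ D_r ⊆ σp`. -/
def HasDominatingPointSpectrum (σ σp : Set ℂ) (R : ℝ) : Prop :=
  0 < R ∧ (σ \ Metric.ball 0 R).Nonempty ∧
    ∀ r : ℝ, R < r →
      ((σ ∩ Metric.ball 0 r ∩ σp).Nonempty →
        (peripheralSpectrum (σ ∩ Metric.ball 0 r)).Nonempty) ∧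
      σ \ Metric.ball 0 r ⊆ σp


theorem stmt1 (σ σp : Set ℂ) (hbdd : Bornology.IsBounded σ) (hne : σ.Nonempty)
    (hsub : σp ⊆ σ) (R : ℝ) (hdom : HasDominatingPointSpectrum σ σp R) :
    ¬ ∃ (l : ℕ → ℂ) (r : ℝ), R < r ∧ (∀ n, l n ∈ σp) ∧
      (∀ n, ‖l n‖ < ‖l (n + 1)‖) ∧
      Filter.Tendsto (fun n => ‖l n‖) Filter.atTop (nhds r) := by
  rintro ⟨l, r, hr, hmem, hmono, htend⟩
  obtain ⟨hR, -, hdom⟩ := hdom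
  have hsm : StrictMono (fun n => ‖l n‖) := strictMono_nat_of_lt_succ hmono
  have hle : ∀ n, ‖l n‖ ≤ r := fun n => hsm.monotone.ge_of_tendsto htend n
  have hlt : ∀ n, ‖l n‖ < r := fun n => lt_of_lt_of_le (hmono n) (hle (n + 1))
  have hball : ∀ n, l n ∈ Metric.ball (0 : ℂ) r := by
    intro n
    simp only [Metric.mem_ball, Complex.dist_eq, sub_zero]
    exact hlt n
  obtain ⟨z, ⟨hz1, hz2⟩, hzeq⟩ :=
    (hdom r hr).1 ⟨l 0, ⟨⟨hsub (hmem 0), hball 0⟩, hmem 0⟩⟩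
  obtain ⟨C, hC⟩ := hbdd.subset_closedBall 0
  have hbd : BddAbove (Set.range fun w : (σ ∩ Metric.ball 0 r : Set ℂ) =>
      ‖(w : ℂ)‖) := by
    refine ⟨C, ?_⟩
    rintro x ⟨⟨w, hw⟩, rfl⟩
    have := hC hw.1
    simpa [Complex.dist_eq] using this
  have hsup : r ≤ ⨆ w : (σ ∩ Metric.ball 0 r : Set ℂ), ‖(w : ℂ)‖ := by
    refine le_of_tendsto' htend fun n => ?_
    exact le_ciSup hbd (⟨l n, hsub (hmem n), hball n⟩ : (σ ∩ Metric.ball 0 r : Set ℂ))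
  have : ‖z‖ < r := by
    simpa [Complex.dist_eq] using hz2
  exact absurd (hzeq ▸ this) (not_lt.mpr hsup)
end

section
/- (Yosida's mean ergodic theorem, first part.) Let F be a Hausdorff locally convex topological vector space over ℂ, let U : F → F be a continuous linear operator such that the family of iterates {U^n : n ∈ ℕ} is equicontinuous, and let ψ ∈ F. Suppose there exist ψ₀ ∈ F and a strictly increasing sequence (n_i) of natural numbers such that for every continuous linear functional φ : F → ℂ one has φ(A_{n_i}(U)ψ) → φ(ψ₀) as i → ∞ (weak convergence of a subsequence of averages). Then U ψ₀ = ψ₀ and A_n(U)ψ → ψ₀ in the topology of F as n → ∞. -/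
open Filter Topology Uniformity Pointwise

section Aux

variable {F : Type*} [AddCommGroup F] [Module ℂ F] [TopologicalSpace F]
  [IsTopologicalAddGroup F] [ContinuousSMul ℂ F]
  [Module ℝ F] [IsScalarTower ℝ ℂ F] [LocallyConvexSpace ℝ F]

lemma aux_smul_real (r : ℝ) (y : F) : (r : ℂ) • y = r • y := by
  rw [← Complex.coe_algebraMap, algebraMap_smul]

lemma aux_sep (R : Submodule ℂ F) (x : F) (hx : x ∉ closure (R : Set F)) :
    ∃ φ : F →L[ℂ] ℂ, (∀ a ∈ R, φ a = 0) ∧ φ x ≠ 0 := by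
  haveI : ContinuousSMul ℝ F := IsScalarTower.continuousSMul ℂ
  have hconv : Convex ℝ (R : Set F) := by
    intro a ha b hb s t hs ht hst
    have h : (s : ℂ) • a + (t : ℂ) • b ∈ R :=
      R.add_mem (R.smul_mem _ ha) (R.smul_mem _ hb)
    rw [aux_smul_real, aux_smul_real] at h
    exact h
  obtain ⟨f, u, hfu, hux⟩ :=
    geometric_hahn_banach_closed_point hconv.closure isClosed_closure hx
  have hu0 : 0 < u := by simpa using hfu 0 (subset_closure R.zero_mem)
  have hf0 : ∀ a ∈ R, f a = 0 := by
    intro a ha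
    by_contra hfa
    have hmem : (((u + 1) / f a : ℝ) : ℂ) • a ∈ R := R.smul_mem _ ha
    have h1 := hfu _ (subset_closure hmem)
    rw [aux_smul_real, map_smul] at h1
    simp only [smul_eq_mul] at h1
    rw [div_mul_cancel₀ _ hfa] at h1
    linarith
  set g : F →ₗ[ℂ] ℂ := LinearMap.extendTo𝕜' (f : F →ₗ[ℝ] ℝ) with hg
  have hgapp : ∀ y : F, g y = (f y : ℂ) - (RCLike.I : ℂ) * (f ((RCLike.I : ℂ) • y) : ℂ) :=
    fun y => LinearMap.extendTo𝕜'_apply _ y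
  have cont : Continuous fun y : F => g y := by
    simp only [hgapp]
    exact (Complex.continuous_ofReal.comp f.continuous).sub
      (continuous_const.mul (Complex.continuous_ofReal.comp
        (f.continuous.comp (continuous_const_smul _))))
  refine ⟨⟨g, cont⟩, ?_, ?_⟩
  · intro a ha
    have h2 : (RCLike.I : ℂ) • a ∈ R := R.smul_mem _ ha
    show g a = 0
    rw [hgapp, hf0 a ha, hf0 _ h2]
    simp
  · have hre : RCLike.re (g x) = f x := LinearMap.extendTo𝕜'_apply_re (f : F →ₗ[ℝ] ℝ) x
    intro h
    have h' : g x = 0 := h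
    rw [h'] at hre
    simp at hre
    linarith

end Aux

/-- Yosida's mean ergodic theorem, first part, on a Hausdorff locally convex
topological vector space over `ℂ`.  Here `A_n(U)ψ = n⁻¹ ∑_{k=0}^{n-1} U^k ψ`. -/
theorem stmt3 (F : Type*) [AddCommGroup F] [Module ℂ F] [UniformSpace F]
    [IsUniformAddGroup F] [ContinuousSMul ℂ F] [T2Space F]
    [Module ℝ F] [IsScalarTower ℝ ℂ F] [LocallyConvexSpace ℝ F]
    (U : F →L[ℂ] F)
    (hequi : Equicontinuous fun n : ℕ => ⇑(U ^ n))
    (ψ ψ₀ : F) (ni : ℕ → ℕ) (hni : StrictMono ni)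
    (hweak : ∀ φ : F →L[ℂ] ℂ,
      Tendsto (fun i : ℕ => φ (((ni i : ℂ))⁻¹ • ∑ k ∈ Finset.range (ni i), (U ^ k) ψ))
        atTop (nhds (φ ψ₀))) :
    U ψ₀ = ψ₀ ∧
      Tendsto (fun n : ℕ => ((n : ℂ))⁻¹ • ∑ k ∈ Finset.range n, (U ^ k) ψ)
        atTop (nhds ψ₀) := by
  haveI : ContinuousSMul ℝ F := IsScalarTower.continuousSMul ℂ
  set A : ℕ → F →L[ℂ] F := fun n => ((n : ℂ))⁻¹ • ∑ k ∈ Finset.range n, U ^ k with hA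
  have hAapp : ∀ (n : ℕ) (x : F),
      A n x = ((n : ℂ))⁻¹ • ∑ k ∈ Finset.range n, (U ^ k) x := by
    intro n x
    simp [hA, ContinuousLinearMap.sum_apply]
  -- Equicontinuity at 0, pointwise form
  have hU0 : ∀ V ∈ 𝓝 (0 : F), ∃ W ∈ 𝓝 (0 : F), ∀ y ∈ W, ∀ n : ℕ, (U ^ n) y ∈ V := by
    intro V hV
    have hent : {p : F × F | p.2 - p.1 ∈ V} ∈ 𝓤 F := by
      rw [uniformity_eq_comap_nhds_zero F]
      exact Filter.preimage_mem_comap hV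
    have h := hequi 0 _ hent
    rw [Filter.eventually_iff_exists_mem] at h
    obtain ⟨W, hW, hWh⟩ := h
    exact ⟨W, hW, fun y hy n => by simpa using hWh y hy n⟩
  -- The orbit of any point is von Neumann bounded
  have hbdd : ∀ w : F, Bornology.IsVonNBounded ℂ (Set.range fun n : ℕ => (U ^ n) w) := by
    intro w V hV
    obtain ⟨W, hW, hWV⟩ := hU0 V hV
    have habs : Absorbs ℂ W {w} := absorbent_nhds_zero hW w
    refine habs.eventually.mono fun c hc => ?_
    rintro _ ⟨n, rfl⟩
    obtain ⟨y, hy, hyw⟩ := Set.mem_smul_set.mp (hc (Set.mem_singleton w))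
    show (U ^ n) w ∈ c • V
    rw [← hyw, map_smul]
    exact Set.smul_mem_smul_set (hWV y hy n)
  have hinv : Tendsto (fun n : ℕ => ((n : ℂ))⁻¹) atTop (𝓝 0) := by
    have h1 : Tendsto (fun n : ℕ => ((n : ℝ))⁻¹) atTop (𝓝 0) := tendsto_inv_atTop_nhds_zero_nat
    have h2 := (Complex.continuous_ofReal.tendsto 0).comp h1
    have h3 : (fun n : ℕ => (((n : ℝ)⁻¹ : ℝ) : ℂ)) = fun n : ℕ => ((n : ℂ))⁻¹ := by
      funext n; push_cast; ring
    rw [Function.comp_def, h3] at h2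
    simpa using h2
  have horb : ∀ w : F, Tendsto (fun n : ℕ => ((n : ℂ))⁻¹ • (U ^ n) w) atTop (𝓝 0) := by
    intro w
    have h := (hbdd w).smul_tendsto_zero
      (Filter.Eventually.of_forall fun n => Set.mem_range_self n) hinv
    exact h
  have hsmw : ∀ w : F, Tendsto (fun n : ℕ => ((n : ℂ))⁻¹ • w) atTop (𝓝 0) := by
    intro w
    have h := hinv.smul_const w
    simpa using h
  -- Step 1 preliminaries
  have hUA : ∀ n : ℕ, U (A n ψ) - A n ψ = ((n : ℂ))⁻¹ • ((U ^ n) ψ - ψ) := by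
    intro n
    rw [hAapp, map_smul, map_sum, ← smul_sub, ← Finset.sum_sub_distrib]
    congr 1
    have h : ∀ k, U ((U ^ k) ψ) - (U ^ k) ψ = (U ^ (k + 1)) ψ - (U ^ k) ψ := by
      intro k
      rw [pow_succ', ContinuousLinearMap.mul_apply]
    simp only [h]
    rw [Finset.sum_range_sub (fun k => (U ^ k) ψ)]
    simp
  have hdiff0 : Tendsto (fun n : ℕ => U (A n ψ) - A n ψ) atTop (𝓝 0) := by
    simp only [hUA, smul_sub]
    simpa using (horb ψ).sub (hsmw ψ)
  have step1 : U ψ₀ = ψ₀ := by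
    by_contra hne
    have hxne : U ψ₀ - ψ₀ ≠ 0 := sub_ne_zero.mpr hne
    have hx : (U ψ₀ - ψ₀) ∉ closure ((⊥ : Submodule ℂ F) : Set F) := by
      rw [Submodule.bot_coe, closure_singleton]
      simpa using hxne
    obtain ⟨φ, -, hφx⟩ := aux_sep ⊥ _ hx
    apply hφx
    have h1 : Tendsto (fun i => φ (U (A (ni i) ψ))) atTop (𝓝 (φ (U ψ₀))) := by
      have h := hweak (φ.comp U)
      simp only [← hAapp, ContinuousLinearMap.comp_apply] at h
      exact h
    have h2 : Tendsto (fun i => φ (A (ni i) ψ)) atTop (𝓝 (φ ψ₀)) := by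
      have h := hweak φ
      simp only [← hAapp] at h
      exact h
    have h3 : Tendsto (fun i => φ (U (A (ni i) ψ)) - φ (A (ni i) ψ)) atTop (𝓝 0) := by
      have h4 : Tendsto (fun n : ℕ => φ (U (A n ψ) - A n ψ)) atTop (𝓝 0) := by
        have h := (φ.continuous.tendsto 0).comp hdiff0
        simpa [Function.comp_def, map_sub] using h
      have h5 := h4.comp hni.tendsto_atTop
      simp only [Function.comp_def, map_sub] at h5
      exact h5
    have h6 := tendsto_nhds_unique (h1.sub h2) h3
    rw [map_sub]
    exact h6
  -- The range of 1 - U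
  set R : Submodule ℂ F :=
    LinearMap.range (((1 - U : F →L[ℂ] F) : F →ₗ[ℂ] F)) with hRdef
  have hRten : ∀ z ∈ R, Tendsto (fun n : ℕ => A n z) atTop (𝓝 0) := by
    rintro z ⟨w, hw⟩
    have hw' : w - U w = z := by
      simpa [ContinuousLinearMap.sub_apply] using hw
    have key : ∀ n : ℕ, A n (w - U w) = ((n : ℂ))⁻¹ • (w - (U ^ n) w) := by
      intro n
      rw [hAapp]
      congr 1
      have h : ∀ k, (U ^ k) (w - U w) = (U ^ k) w - (U ^ (k + 1)) w := by
        intro k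
        rw [map_sub, pow_succ, ContinuousLinearMap.mul_apply]
      simp only [h]
      rw [Finset.sum_range_sub' (fun k => (U ^ k) w)]
      simp
    rw [← hw']
    simp only [key, smul_sub]
    simpa using (hsmw w).sub (horb w)
  -- ψ - A n ψ belongs to R for n ≥ 1
  have hmem : ∀ n : ℕ, 1 ≤ n → ψ - A n ψ ∈ R := by
    intro n hn
    have hn0 : (n : ℂ) ≠ 0 := Nat.cast_ne_zero.mpr (by omega)
    have hψeq : ψ - A n ψ = ((n : ℂ))⁻¹ • ∑ k ∈ Finset.range n, (ψ - (U ^ k) ψ) := by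
      rw [Finset.sum_sub_distrib, smul_sub, Finset.sum_const, Finset.card_range,
        ← Nat.cast_smul_eq_nsmul ℂ, smul_smul, inv_mul_cancel₀ hn0, one_smul, hAapp]
    rw [hψeq]
    refine R.smul_mem _ (Submodule.sum_mem R fun k _ => ?_)
    refine ⟨∑ j ∈ Finset.range k, (U ^ j) ψ, ?_⟩
    have hring : ((1 - U : F →L[ℂ] F) * ∑ j ∈ Finset.range k, U ^ j) = 1 - U ^ k := by
      have h := mul_geom_sum U k
      rw [← neg_sub U 1, neg_mul, h, neg_sub]
    have happ := congrArg (fun T : F →L[ℂ] F => T ψ) hring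
    simpa [ContinuousLinearMap.mul_apply, ContinuousLinearMap.sum_apply] using happ
  -- Equicontinuity of the averages at 0 with respect to convex neighborhoods
  have hAequi : ∀ V ∈ 𝓝 (0 : F), Convex ℝ V →
      ∃ W ∈ 𝓝 (0 : F), ∀ y ∈ W, ∀ n : ℕ, A n y ∈ V := by
    intro V hV hVc
    obtain ⟨W, hW, hWV⟩ := hU0 V hV
    refine ⟨W, hW, fun y hy n => ?_⟩
    rcases Nat.eq_zero_or_pos n with rfl | hn
    · simpa [hAapp] using mem_of_mem_nhds hV
    · have hn0 : (n : ℝ) ≠ 0 := Nat.cast_ne_zero.mpr (by omega)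
      have hsm : ∀ x : F, ((n : ℂ))⁻¹ • x = ((n : ℝ))⁻¹ • x := by
        intro x
        have hcast : (((n : ℝ)⁻¹ : ℝ) : ℂ) = ((n : ℂ))⁻¹ := by push_cast; ring
        rw [← hcast, aux_smul_real]
      rw [hAapp, hsm, Finset.smul_sum]
      refine hVc.sum_mem (fun k _ => by positivity) ?_ (fun k _ => hWV y hy k)
      rw [Finset.sum_const, Finset.card_range, nsmul_eq_mul, mul_inv_cancel₀ hn0]
  -- Convergence of averages on the closure of R
  have hclos : ∀ x : F, x ∈ closure (R : Set F) →
      Tendsto (fun n : ℕ => A n x) atTop (𝓝 0) := by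
    intro x hx
    rw [(LocallyConvexSpace.convex_basis_zero ℝ F).tendsto_right_iff]
    rintro V ⟨hV, hVc⟩
    obtain ⟨V₁, hV₁, hV₁V⟩ := exists_nhds_zero_half hV
    obtain ⟨V₂, ⟨hV₂, hV₂c⟩, hV₂V₁⟩ :=
      (LocallyConvexSpace.convex_basis_zero ℝ F).mem_iff.mp hV₁
    obtain ⟨W, hW, hWA⟩ := hAequi V₂ hV₂ hV₂c
    have hxW : ((fun y : F => x - y) ⁻¹' W) ∈ 𝓝 x := by
      have hc : ContinuousAt (fun y : F => x - y) x :=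
        (continuous_const.sub continuous_id).continuousAt
      exact hc.preimage_mem_nhds (by rw [sub_self]; exact hW)
    obtain ⟨z, hzW, hzR⟩ := mem_closure_iff_nhds.mp hx _ hxW
    have hz0 : Tendsto (fun n : ℕ => A n z) atTop (𝓝 0) := hRten z hzR
    have hev : (fun n : ℕ => A n z) ⁻¹' V₂ ∈ atTop := hz0 hV₂
    filter_upwards [hev] with n hn
    have hsplit : A n x = A n z + A n (x - z) := by
      rw [map_sub]; abel
    rw [hsplit]
    exact hV₁V _ (hV₂V₁ hn) _ (hV₂V₁ (hWA _ hzW n))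
  -- ψ - ψ₀ lies in the closure of R
  have hxcl : ψ - ψ₀ ∈ closure (R : Set F) := by
    by_contra hx
    obtain ⟨φ, hφR, hφx⟩ := aux_sep R _ hx
    apply hφx
    have h2 : Tendsto (fun i => φ (A (ni i) ψ)) atTop (𝓝 (φ ψ₀)) := by
      have h := hweak φ
      simp only [← hAapp] at h
      exact h
    have h3 : Tendsto (fun i => φ ψ - φ (A (ni i) ψ)) atTop (𝓝 (φ ψ - φ ψ₀)) :=
      tendsto_const_nhds.sub h2
    have h4 : ∀ᶠ i in atTop, φ ψ - φ (A (ni i) ψ) = 0 := by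
      filter_upwards [eventually_ge_atTop 1] with i hi
      have hni1 : 1 ≤ ni i := le_trans hi hni.le_apply
      rw [← map_sub]
      exact hφR _ (hmem (ni i) hni1)
    have h5 : Tendsto (fun i => φ ψ - φ (A (ni i) ψ)) atTop (𝓝 0) :=
      Tendsto.congr' (Filter.EventuallyEq.symm h4) tendsto_const_nhds
    have h6 := tendsto_nhds_unique h3 h5
    rw [map_sub, h6]
  refine ⟨step1, ?_⟩
  have hψψ₀ : Tendsto (fun n : ℕ => A n (ψ - ψ₀)) atTop (𝓝 0) := hclos _ hxcl
  have heq : ∀ᶠ n : ℕ in atTop, A n (ψ - ψ₀) = A n ψ - ψ₀ := by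
    filter_upwards [eventually_ge_atTop 1] with n hn
    have hn0 : (n : ℂ) ≠ 0 := Nat.cast_ne_zero.mpr (by omega)
    have hk : ∀ k : ℕ, (U ^ k) ψ₀ = ψ₀ := by
      intro k
      induction k with
      | zero => simp
      | succ k ih => rw [pow_succ', ContinuousLinearMap.mul_apply, ih, step1]
    have hAψ₀ : A n ψ₀ = ψ₀ := by
      rw [hAapp]
      simp only [hk]
      rw [Finset.sum_const, Finset.card_range, ← Nat.cast_smul_eq_nsmul ℂ, smul_smul,
        inv_mul_cancel₀ hn0, one_smul]
    rw [map_sub, hAψ₀]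
  have hfin : Tendsto (fun n : ℕ => A n ψ - ψ₀) atTop (𝓝 0) := hψψ₀.congr' heq
  have := tendsto_sub_nhds_zero_iff.mp hfin
  simpa only [hAapp] using this
end

section
/- (Mean ergodic projection onto a peripheral eigenspace in a separable reflexive Banach space.) Let F be a separable complex Banach space that is reflexive, i.e. the canonical inclusion of F into its double dual is surjective. Let U : F → F be a continuous linear operator and λ ∈ ℂ, λ ≠ 0, such that sup_{n ∈ ℕ} ‖(λ⁻¹ • U)^n‖ < ∞. Then there exists a continuous linear operator P : F → F such that: (a) for every ψ ∈ F, A_n(λ⁻¹U)ψ := n⁻¹ ∑_{k=0}^{n-1} λ^{-k} U^k ψ converges in norm to P ψ as n → ∞; (b) P ∘ P = P; (c) P ∘ U = U ∘ P; (d) the range of P equals the eigenspace ker(λ·I − U); (e) the kernel of P equals the norm-closure of the range of (λ·I − U); in particular F = ker(λ·I − U) ⊕ closure(range(λ·I − U)). -/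
open Filter

section MeanErgodicAuxSection
open Filter NormedSpace Finset

lemma mem_closure_of_dual_vanish {F : Type*} [NormedAddCommGroup F] [NormedSpace ℂ F]
    (p : Submodule ℂ F) (x : F)
    (h : ∀ g : StrongDual ℂ F, (∀ s ∈ p, g s = 0) → g x = 0) :
    x ∈ closure (p : Set F) := by
  by_contra hx
  have hconv : Convex ℝ (closure (p : Set F)) := by
    have : Convex ℝ ((p.restrictScalars ℝ : Submodule ℝ F) : Set F) := (p.restrictScalars ℝ).convex
    simpa using this.closure
  obtain ⟨f, u, hfa, hfx⟩ := RCLike.geometric_hahn_banach_closed_point (𝕜 := ℂ)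
    hconv isClosed_closure hx
  have hvan : ∀ s ∈ p, f s = 0 := by
    intro s hs
    by_contra hfs
    have hmem : ∀ c : ℂ, c • s ∈ p := fun c => p.smul_mem c hs
    have key : ∀ c : ℂ, (Complex.re ((f (c • s)))) < u := fun c =>
      hfa _ (subset_closure (hmem c))
    have := key ((u + 1 : ℝ) * (f s)⁻¹)
    rw [map_smul, smul_eq_mul, mul_assoc, inv_mul_cancel₀ hfs, mul_one] at this
    simp at this
    linarith
  have : f x = 0 := h f hvan
  rw [this] at hfx
  have h0 : (0:ℝ) < u := by
    have := hfa 0 (subset_closure p.zero_mem)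
    simpa using this
  simp at hfx
  linarith

namespace MeanErgodicAux
variable {F : Type*} [NormedAddCommGroup F] [NormedSpace ℂ F]

noncomputable def S (T : F →L[ℂ] F) (n : ℕ) : F →L[ℂ] F :=
  (n : ℂ)⁻¹ • ∑ k ∈ Finset.range n, T ^ k

variable {T : F →L[ℂ] F} {C : ℝ} (hC : ∀ n : ℕ, ‖T ^ n‖ ≤ C) (hC1 : 1 ≤ C)

lemma S_apply (n : ℕ) (x : F) : S T n x = (n : ℂ)⁻¹ • ∑ k ∈ Finset.range n, (T ^ k) x := by
  simp [S, ContinuousLinearMap.sum_apply]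

include hC hC1 in
lemma norm_S_le (n : ℕ) : ‖S T n‖ ≤ C := by
  rcases Nat.eq_zero_or_pos n with h | h
  · simp [S, h]; linarith
  · have : ‖∑ k ∈ Finset.range n, T ^ k‖ ≤ n * C := by
      calc ‖∑ k ∈ Finset.range n, T ^ k‖ ≤ ∑ k ∈ Finset.range n, ‖T ^ k‖ :=
            norm_sum_le _ _
        _ ≤ ∑ _k ∈ Finset.range n, C := Finset.sum_le_sum fun k _ => hC k
        _ = n * C := by simp [mul_comm]
    rw [S]
    refine le_trans (ContinuousLinearMap.opNorm_smul_le _ _) ?_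
    calc ‖(n:ℂ)⁻¹‖ * ‖∑ k ∈ Finset.range n, T ^ k‖ ≤ (n:ℝ)⁻¹ * (n * C) := by
          apply mul_le_mul _ this (norm_nonneg _) (by positivity)
          simp
      _ = C := by field_simp

include hC hC1 in
lemma norm_S_apply_le (n : ℕ) (x : F) : ‖S T n x‖ ≤ C * ‖x‖ :=
  le_trans ((S T n).le_opNorm x)
    (mul_le_mul_of_nonneg_right (norm_S_le hC hC1 n) (norm_nonneg x))

lemma pow_apply_fixed {x : F} (hx : T x = x) : ∀ k : ℕ, (T ^ k) x = x := by
  intro k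
  induction k with
  | zero => simp
  | succ m ih => rw [pow_succ, ContinuousLinearMap.mul_apply, hx, ih]

lemma S_apply_fixed {x : F} (hx : T x = x) {n : ℕ} (hn : 1 ≤ n) : S T n x = x := by
  rw [S_apply]
  have : ∑ k ∈ Finset.range n, (T ^ k) x = (n : ℂ) • x := by
    rw [Finset.sum_congr rfl fun k _ => pow_apply_fixed hx k]
    simp [← Nat.cast_smul_eq_nsmul ℂ]
  rw [this, smul_smul, inv_mul_cancel₀ (by exact_mod_cast Nat.cast_ne_zero.mpr (by omega) : (n:ℂ) ≠ 0), one_smul]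

lemma S_sub_apply (n : ℕ) (x : F) :
    S T n (x - T x) = (n : ℂ)⁻¹ • (x - (T ^ n) x) := by
  rw [S_apply]
  congr 1
  have : ∀ k, (T ^ k) (x - T x) = (T ^ k) x - (T ^ (k+1)) x := fun k => by
    rw [map_sub, pow_succ, ContinuousLinearMap.mul_apply]
  rw [Finset.sum_congr rfl fun k _ => this k, Finset.sum_range_sub' (fun k => (T ^ k) x) n]
  simp

include hC in
lemma tendsto_S_range {z : F} (hz : z ∈ Set.range ⇑(1 - T)) :
    Tendsto (fun n => S T n z) atTop (nhds 0) := by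
  obtain ⟨x, rfl⟩ := hz
  have hz' : (1 - T) x = x - T x := by simp [ContinuousLinearMap.sub_apply]
  rw [hz']
  have hb : ∀ n : ℕ, ‖S T n (x - T x)‖ ≤ (n:ℝ)⁻¹ * ((1 + C) * ‖x‖) := by
    intro n
    rw [S_sub_apply, norm_smul]
    gcongr
    · simp
    · calc ‖x - (T ^ n) x‖ ≤ ‖x‖ + ‖(T ^ n) x‖ := norm_sub_le _ _
        _ ≤ ‖x‖ + C * ‖x‖ := by
            gcongr
            exact le_trans ((T ^ n).le_opNorm x) (by gcongr; exact hC n)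
        _ = (1 + C) * ‖x‖ := by ring
  have h0 : Tendsto (fun n : ℕ => (n:ℝ)⁻¹ * ((1 + C) * ‖x‖)) atTop (nhds 0) := by
    simpa using (tendsto_inv_atTop_nhds_zero_nat.mul_const ((1 + C) * ‖x‖))
  refine squeeze_zero_norm hb h0

include hC hC1 in
lemma tendsto_S_closure {z : F} (hz : z ∈ closure (Set.range ⇑(1 - T))) :
    Tendsto (fun n => S T n z) atTop (nhds 0) := by
  rw [NormedAddCommGroup.tendsto_nhds_zero]
  intro ε hε
  have hC0 : (0:ℝ) < C := lt_of_lt_of_le one_pos hC1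
  obtain ⟨x, hx, hxz⟩ := Metric.mem_closure_iff.mp hz (ε / (2 * C)) (by positivity)
  have hxz' : ‖z - x‖ < ε / (2 * C) := by rw [← dist_eq_norm]; exact hxz
  have h1 := tendsto_S_range hC hx
  rw [NormedAddCommGroup.tendsto_nhds_zero] at h1
  filter_upwards [h1 (ε/2) (by positivity)] with n hn
  have : S T n z = S T n x + S T n (z - x) := by rw [← map_add]; congr 1; abel
  rw [this]
  calc ‖S T n x + S T n (z - x)‖ ≤ ‖S T n x‖ + ‖S T n (z - x)‖ := norm_add_le _ _
    _ < ε/2 + C * (ε / (2 * C)) := by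
        gcongr
        exact lt_of_le_of_lt (norm_S_apply_le hC hC1 n _) (by gcongr)
    _ = ε := by field_simp; ring

lemma T_S_sub (n : ℕ) (ψ : F) :
    T (S T n ψ) - S T n ψ = (n : ℂ)⁻¹ • ((T ^ n) ψ - ψ) := by
  rw [S_apply, map_smul, ← smul_sub]
  congr 1
  rw [map_sum, ← Finset.sum_sub_distrib]
  have : ∀ k, T ((T ^ k) ψ) - (T ^ k) ψ = (T ^ (k+1)) ψ - (T ^ k) ψ := by
    intro k
    rw [pow_succ', ContinuousLinearMap.mul_apply]
  rw [Finset.sum_congr rfl fun k _ => this k, Finset.sum_range_sub (fun k => (T ^ k) ψ) n]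
  simp

lemma sub_S_mem_range (n : ℕ) (hn : 1 ≤ n) (ψ : F) :
    ψ - S T n ψ ∈ Set.range ⇑(1 - T) := by
  refine ⟨(n : ℂ)⁻¹ • ∑ k ∈ Finset.range n, ∑ j ∈ Finset.range k, (T ^ j) ψ, ?_⟩
  rw [map_smul, map_sum]
  have hterm : ∀ k, (1 - T) (∑ j ∈ Finset.range k, (T ^ j) ψ) = ψ - (T ^ k) ψ := by
    intro k
    rw [map_sum]
    have : ∀ j, (1 - T) ((T ^ j) ψ) = (T ^ j) ψ - (T ^ (j+1)) ψ := by
      intro j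
      simp [ContinuousLinearMap.sub_apply, pow_succ', ContinuousLinearMap.mul_apply]
    rw [Finset.sum_congr rfl fun j _ => this j, Finset.sum_range_sub' (fun j => (T ^ j) ψ) k]
    simp
  rw [Finset.sum_congr rfl fun k _ => hterm k, Finset.sum_sub_distrib, S_apply, smul_sub]
  congr 1
  rw [Finset.sum_const, Finset.card_range, ← Nat.cast_smul_eq_nsmul ℂ, smul_smul,
    inv_mul_cancel₀ (by exact_mod_cast Nat.cast_ne_zero.mpr (by omega) : (n:ℂ) ≠ 0), one_smul]


include hC in
lemma tendsto_T_S_sub (ψ : F) :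
    Tendsto (fun n => T (S T n ψ) - S T n ψ) atTop (nhds 0) := by
  have hb : ∀ n : ℕ, ‖T (S T n ψ) - S T n ψ‖ ≤ (n:ℝ)⁻¹ * ((C + 1) * ‖ψ‖) := by
    intro n
    rw [T_S_sub, norm_smul]
    gcongr
    · simp
    · calc ‖(T ^ n) ψ - ψ‖ ≤ ‖(T ^ n) ψ‖ + ‖ψ‖ := norm_sub_le _ _
        _ ≤ C * ‖ψ‖ + ‖ψ‖ := by
            gcongr
            exact le_trans ((T ^ n).le_opNorm ψ) (by gcongr; exact hC n)
        _ = (C + 1) * ‖ψ‖ := by ring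
  refine squeeze_zero_norm hb ?_
  simpa using (tendsto_inv_atTop_nhds_zero_nat.mul_const ((C + 1) * ‖ψ‖))

include hC hC1 in
lemma exists_fixed_decomp (hrefl : Function.Surjective ⇑(inclusionInDoubleDual ℂ F)) (ψ : F) :
    ∃ y : F, T y = y ∧ ψ - y ∈ closure (Set.range ⇑(1 - T)) := by
  set ι := inclusionInDoubleDual ℂ F with hι
  set s : ℕ → WeakDual ℂ (StrongDual ℂ F) := fun n => StrongDual.toWeakDual (ι (S T n ψ))
    with hs
  have hb : ∀ n, s n ∈ WeakDual.toStrongDual ⁻¹' Metric.closedBall 0 (C * ‖ψ‖) := by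
    intro n
    simp only [Set.mem_preimage, Metric.mem_closedBall, dist_zero_right]
    refine (dist_zero_right (WeakDual.toStrongDual (s n))).trans_le ?_
    show ‖ι (S T n ψ)‖ ≤ C * ‖ψ‖
    calc ‖ι (S T n ψ)‖ ≤ ‖S T n ψ‖ := double_dual_bound ℂ F _
      _ ≤ C * ‖ψ‖ := norm_S_apply_le hC hC1 n ψ
  have hcpt := WeakDual.isCompact_closedBall (E := StrongDual ℂ F) (𝕜 := ℂ) 0 (C * ‖ψ‖)
  have hle : Filter.map s atTop ≤ Filter.principal
      (WeakDual.toStrongDual ⁻¹' Metric.closedBall 0 (C * ‖ψ‖)) :=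
    Filter.le_principal_iff.mpr (Filter.mem_map.mpr (Filter.Eventually.of_forall hb))
  obtain ⟨Φ, -, hΦ⟩ := hcpt.exists_clusterPt hle
  obtain ⟨y, hy⟩ := hrefl (WeakDual.toStrongDual Φ)
  have hΦy : ∀ g : StrongDual ℂ F, Φ g = g y := by
    intro g
    have : Φ g = (WeakDual.toStrongDual Φ) g := rfl
    rw [this, ← hy]
    exact dual_def ℂ F y g
  have hev : ∀ g : StrongDual ℂ F, ClusterPt (g y) (Filter.map (fun n => g (S T n ψ)) atTop) := by
    intro g
    have hc : ContinuousAt (fun Φ' : WeakDual ℂ (StrongDual ℂ F) => Φ' g) Φ :=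
      (WeakDual.eval_continuous g).continuousAt
    have ht : Tendsto (fun Φ' : WeakDual ℂ (StrongDual ℂ F) => Φ' g) (Filter.map s atTop)
        (Filter.map (fun n => g (S T n ψ)) atTop) := by
      rw [Filter.tendsto_map'_iff]
      exact Filter.tendsto_map
    have := hΦ.map hc ht
    rwa [hΦy g] at this
  have hfix : T y = y := by
    rw [← sub_eq_zero]
    apply eq_zero_of_forall_dual_eq_zero ℂ
    intro g
    have h1 : Tendsto (fun n => g (T (S T n ψ)) - g (S T n ψ)) atTop (nhds 0) := by
      have := (g.continuous.tendsto 0).comp (tendsto_T_S_sub hC ψ)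
      simpa [Function.comp_def, map_sub] using this
    have h2 := hev (g.comp T - g)
    have h3 : (fun n => (g.comp T - g) (S T n ψ)) = fun n => g (T (S T n ψ)) - g (S T n ψ) := by
      funext n; simp [ContinuousLinearMap.sub_apply]
    rw [h3] at h2
    have h4 : (g.comp T - g) y = 0 :=
      eq_of_nhds_neBot (Filter.NeBot.mono h2 (inf_le_inf_left _ h1))
    simpa [ContinuousLinearMap.sub_apply, map_sub] using h4
  refine ⟨y, hfix, ?_⟩
  have hset : (↑(LinearMap.range ((1 - T : F →L[ℂ] F) : F →ₗ[ℂ] F)) : Set F)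
      = Set.range ⇑(1 - T) := by
    ext w; simp [LinearMap.mem_range]
  rw [← hset]
  apply mem_closure_of_dual_vanish
  intro g hg
  have hgψ : ∀ n : ℕ, 1 ≤ n → g (S T n ψ) = g ψ := by
    intro n hn
    have hm := sub_S_mem_range (T := T) n hn ψ
    obtain ⟨x, hx⟩ := hm
    have : g (ψ - S T n ψ) = 0 := by
      rw [← hx]
      exact hg _ (LinearMap.mem_range.mpr ⟨x, rfl⟩)
    rw [map_sub] at this
    exact (sub_eq_zero.mp this).symm
  have ht : Tendsto (fun n => g (S T n ψ)) atTop (nhds (g ψ)) := by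
    apply Tendsto.congr' _ tendsto_const_nhds
    filter_upwards [eventually_ge_atTop 1] with n hn using (hgψ n hn).symm
  have hgy : g y = g ψ := eq_of_nhds_neBot (Filter.NeBot.mono (hev g) (inf_le_inf_left _ ht))
  rw [map_sub, hgy, sub_self]

include hC hC1 in
lemma exists_tendsto_S (hrefl : Function.Surjective ⇑(inclusionInDoubleDual ℂ F)) (ψ : F) :
    ∃ y : F, Tendsto (fun n => S T n ψ) atTop (nhds y) := by
  obtain ⟨y, hfix, hmem⟩ := exists_fixed_decomp hC hC1 hrefl ψ
  refine ⟨y, ?_⟩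
  have h0 := tendsto_S_closure hC hC1 hmem
  have hlim : Tendsto (fun n => y + S T n (ψ - y)) atTop (nhds y) := by
    simpa using tendsto_const_nhds.add h0
  apply Tendsto.congr' _ hlim
  filter_upwards [eventually_ge_atTop 1] with n hn
  have heq : S T n ψ = S T n y + S T n (ψ - y) := by
    rw [← map_add]; congr 1; abel
  rw [heq, S_apply_fixed (T := T) hfix hn]

end MeanErgodicAux


end MeanErgodicAuxSection

open MeanErgodicAux NormedSpace Finset in

/-- Mean ergodic projection onto a peripheral eigenspace in a separable reflexive
complex Banach space.  `A_n(λ⁻¹U)ψ = n⁻¹ ∑_{k=0}^{n-1} λ^{-k} U^k ψ` converges in norm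
to a continuous projection `P` commuting with `U`, whose range is `ker(λI − U)` and whose
kernel is the closure of the range of `λI − U`. -/
theorem stmt5 (F : Type*) [NormedAddCommGroup F] [NormedSpace ℂ F] [CompleteSpace F]
    [TopologicalSpace.SeparableSpace F]
    (hrefl : Function.Surjective ⇑(NormedSpace.inclusionInDoubleDual ℂ F))
    (U : F →L[ℂ] F) (lam : ℂ) (hlam : lam ≠ 0)
    (hbdd : ∃ C : ℝ, ∀ n : ℕ, ‖(lam⁻¹ • U) ^ n‖ ≤ C) :
    ∃ P : F →L[ℂ] F,
      (∀ ψ : F,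
        Tendsto (fun n : ℕ => ((n : ℂ))⁻¹ • ∑ k ∈ Finset.range n, lam⁻¹ ^ k • (U ^ k) ψ)
          atTop (nhds (P ψ))) ∧
      P.comp P = P ∧
      P.comp U = U.comp P ∧
      Set.range ⇑P = {ψ : F | U ψ = lam • ψ} ∧
      {ψ : F | P ψ = 0} = closure (Set.range ⇑(lam • ContinuousLinearMap.id ℂ F - U)) := by
  classical
  set T : F →L[ℂ] F := lam⁻¹ • U with hT
  obtain ⟨C0, hC0⟩ := hbdd
  set C : ℝ := max C0 1 with hCdef
  have hC : ∀ n : ℕ, ‖T ^ n‖ ≤ C := fun n => le_trans (hC0 n) (le_max_left _ _)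
  have hC1 : (1:ℝ) ≤ C := le_max_right _ _
  -- the averages in the statement are `S T n ψ`
  have hSeq : ∀ (n : ℕ) (ψ : F),
      S T n ψ = (n : ℂ)⁻¹ • ∑ k ∈ Finset.range n, lam⁻¹ ^ k • (U ^ k) ψ := by
    intro n ψ
    rw [S_apply]
    congr 1
    refine Finset.sum_congr rfl fun k _ => ?_
    rw [hT, smul_pow]
    rfl
  -- limit function
  have hex : ∀ ψ : F, ∃ y : F, Tendsto (fun n => S T n ψ) atTop (nhds y) :=
    exists_tendsto_S hC hC1 hrefl
  choose P0 hP0 using hex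
  -- P0 is linear and bounded
  have hadd : ∀ x y : F, P0 (x + y) = P0 x + P0 y := by
    intro x y
    exact tendsto_nhds_unique ((hP0 (x + y)).congr fun n => map_add (S T n) x y)
      ((hP0 x).add (hP0 y))
  have hsmul : ∀ (c : ℂ) (x : F), P0 (c • x) = c • P0 x := by
    intro c x
    exact tendsto_nhds_unique ((hP0 (c • x)).congr fun n => map_smul (S T n) c x)
      ((hP0 x).const_smul c)
  have hbound : ∀ x : F, ‖P0 x‖ ≤ C * ‖x‖ := by
    intro x
    exact le_of_tendsto (hP0 x).norm
      (Filter.Eventually.of_forall fun n => norm_S_apply_le hC hC1 n x)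
  set Plin : F →ₗ[ℂ] F :=
    { toFun := P0, map_add' := hadd, map_smul' := hsmul } with hPlin
  set P : F →L[ℂ] F := Plin.mkContinuous C hbound with hPdef
  have hPapp : ∀ x : F, P x = P0 x := fun x => rfl
  -- P ψ is a fixed point of T
  have hfix : ∀ ψ : F, T (P ψ) = P ψ := by
    intro ψ
    refine tendsto_nhds_unique (f := fun n => T (S T n ψ)) (l := atTop) ?_ ?_
    · exact (T.continuous.tendsto (P0 ψ)).comp (hP0 ψ)
    · have h1 : Tendsto (fun n => S T n ψ + (T (S T n ψ) - S T n ψ)) atTop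
          (nhds (P0 ψ + 0)) := (hP0 ψ).add (tendsto_T_S_sub hC ψ)
      rw [add_zero] at h1
      refine h1.congr fun n => by abel
  have hfixS : ∀ (ψ : F), T ψ = ψ → P ψ = ψ := by
    intro ψ hψ
    refine tendsto_nhds_unique (hP0 ψ) ?_
    apply Tendsto.congr' _ (tendsto_const_nhds (x := ψ))
    filter_upwards [eventually_ge_atTop 1] with n hn using (S_apply_fixed hψ hn).symm
  refine ⟨P, ?_, ?_, ?_, ?_, ?_⟩
  · intro ψ
    have := hP0 ψ
    rw [funext fun n => hSeq n ψ] at this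
    exact this
  · ext ψ
    exact hfixS (P ψ) (hfix ψ)
  · ext ψ
    show P (U ψ) = U (P ψ)
    have hcomm : ∀ n : ℕ, U (S T n ψ) = S T n (U ψ) := by
      intro n
      rw [S_apply, S_apply, map_smul, map_sum]
      congr 1
      refine Finset.sum_congr rfl fun k _ => ?_
      have hcUT : Commute U T := by
        rw [hT]; exact (Commute.refl U).smul_right lam⁻¹
      have := (hcUT.symm.pow_left k).symm
      calc U ((T ^ k) ψ) = (U * T ^ k) ψ := rfl
        _ = (T ^ k * U) ψ := by rw [this]
        _ = (T ^ k) (U ψ) := rfl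
    refine tendsto_nhds_unique (f := fun n => S T n (U ψ)) (l := atTop) (hP0 (U ψ)) ?_
    have := (U.continuous.tendsto (P0 ψ)).comp (hP0 ψ)
    refine Tendsto.congr (fun n => hcomm n) this
  · ext ψ
    simp only [Set.mem_range, Set.mem_setOf_eq]
    constructor
    · rintro ⟨φ, rfl⟩
      have h := hfix φ
      rw [hT] at h
      calc U (P φ) = lam • (lam⁻¹ • U) (P φ) := by
            rw [ContinuousLinearMap.smul_apply, smul_smul, mul_inv_cancel₀ hlam, one_smul]
        _ = lam • P φ := by rw [h]
    · intro hψ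
      have hTψ : T ψ = ψ := by
        rw [hT, ContinuousLinearMap.smul_apply, hψ, smul_smul, inv_mul_cancel₀ hlam, one_smul]
      exact ⟨ψ, hfixS ψ hTψ⟩
  · have hrange : Set.range ⇑(lam • ContinuousLinearMap.id ℂ F - U) = Set.range ⇑(1 - T) := by
      have happ : ∀ x : F, (lam • ContinuousLinearMap.id ℂ F - U) x = lam • ((1 - T) x) := by
        intro x
        simp only [ContinuousLinearMap.sub_apply, ContinuousLinearMap.smul_apply,
          ContinuousLinearMap.id_apply, ContinuousLinearMap.one_apply, hT, smul_sub,
          smul_smul, mul_inv_cancel₀ hlam, one_smul]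
      ext w
      constructor
      · rintro ⟨x, rfl⟩
        exact ⟨lam • x, by rw [map_smul, ← happ x]⟩
      · rintro ⟨x, rfl⟩
        refine ⟨lam⁻¹ • x, ?_⟩
        rw [happ, map_smul, smul_smul, mul_inv_cancel₀ hlam, one_smul]
    rw [hrange]
    ext ψ
    simp only [Set.mem_setOf_eq]
    constructor
    · intro hψ
      have hlim : Tendsto (fun n => ψ - S T n ψ) atTop (nhds ψ) := by
        have h2 := tendsto_const_nhds (x := ψ) (f := atTop (α := ℕ)) |>.sub (hP0 ψ)
        have h3 : P0 ψ = 0 := by rw [← hPapp]; exact hψ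
        rwa [h3, sub_zero] at h2
      refine mem_closure_of_tendsto hlim ?_
      filter_upwards [eventually_ge_atTop 1] with n hn using sub_S_mem_range n hn ψ
    · intro hψ
      have h0 := tendsto_S_closure hC hC1 hψ
      exact tendsto_nhds_unique (hP0 ψ) h0
end

section
/- Let F be a complex vector space, U : F → F a linear map, J a finite index set, μ : J → ℂ, and P_j : F → F (j ∈ J) linear maps satisfying: P_j ∘ P_j = P_j for all j; P_i ∘ P_j = 0 for i ≠ j; U ∘ P_j = P_j ∘ U for all j; and U(P_j x) = μ_j • (P_j x) for all x ∈ F and all j (the range of P_j lies in the eigenspace of U at μ_j). Let λ ∈ ℂ with λ ≠ 0 and suppose ψ ∈ F satisfies U(ψ − ∑_{j ∈ J} P_j ψ) = λ • ψ. Then P_j ψ = 0 for every j ∈ J, and consequently U ψ = λ • ψ. -/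
/-- Cancellation step of the Generalized Laplace Analysis theorem: a vector `ψ` with
`U(ψ − ∑_j P_j ψ) = λ • ψ` (λ ≠ 0), where the `P_j` are mutually orthogonal
idempotents commuting with `U` whose ranges lie in the eigenspaces of `U` at `μ_j`,
is annihilated by each `P_j` and is a genuine eigenvector of `U` at `λ`. -/
theorem stmt6 (F : Type*) [AddCommGroup F] [Module ℂ F]
    (J : Type*) [Fintype J] (U : F →ₗ[ℂ] F) (μ : J → ℂ) (P : J → (F →ₗ[ℂ] F))
    (hidem : ∀ j, (P j).comp (P j) = P j)
    (horth : ∀ i j, i ≠ j → (P i).comp (P j) = 0)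
    (hcomm : ∀ j, U.comp (P j) = (P j).comp U)
    (heig : ∀ j x, U (P j x) = μ j • P j x)
    (lam : ℂ) (hlam : lam ≠ 0) (ψ : F)
    (hψ : U (ψ - ∑ j, P j ψ) = lam • ψ) :
    (∀ j, P j ψ = 0) ∧ U ψ = lam • ψ := by
  have hz : ∀ j, P j ψ = 0 := by
    intro j
    have h1 : P j (U (ψ - ∑ i, P i ψ)) = lam • P j ψ := by
      rw [hψ, map_smul]
    have h2 : P j (ψ - ∑ i, P i ψ) = 0 := by
      rw [map_sub, map_sum]
      have : ∑ i, P j (P i ψ) = P j ψ := by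
        rw [Finset.sum_eq_single j]
        · exact congrFun (congrArg DFunLike.coe (hidem j)) ψ
        · intro i _ hi
          exact congrFun (congrArg DFunLike.coe (horth j i (Ne.symm hi))) ψ
        · simp
      rw [this, sub_self]
    have h3 : P j (U (ψ - ∑ i, P i ψ)) = 0 := by
      have := congrFun (congrArg DFunLike.coe (hcomm j)) (ψ - ∑ i, P i ψ)
      simp only [LinearMap.comp_apply] at this
      rw [← this, h2, map_zero]
    rw [h3] at h1
    exact (smul_eq_zero.mp h1.symm).resolve_left hlam
  refine ⟨hz, ?_⟩
  have : (∑ j, P j ψ) = 0 := by simp [hz]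
  rwa [this, sub_zero] at hψ
end

section
/- For every m ∈ ℕ and n ∈ ℤ, the complex-valued function b_{m,n}(x,s) = x^m · exp(−m ∫₀^s (ρ(u) − ρ*) du) · exp(i n s) on ℝ² is an eigenfunction of the Koopman semigroup of the flow Φ: for all t ∈ ℝ and all (x,s) ∈ ℝ², b_{m,n}(Φ_t(x,s)) = exp((m ρ* + i n) t) · b_{m,n}(x,s). -/
open MeasureTheory Real

/-- The average `ρ* = (2π)⁻¹ ∫₀^{2π} ρ(u) du`. -/
noncomputable def rhoStar (ρ : ℝ → ℝ) : ℝ := (2 * π)⁻¹ * ∫ u in (0:ℝ)..(2 * π), ρ u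

/-- The flow `Φ_t(x,s) = (x · exp(∫_s^{s+t} ρ(u) du), s + t)` of the linearized
limit-cycle system `ẋ = ρ(s)x`, `ṡ = 1`. -/
noncomputable def flowMap (ρ : ℝ → ℝ) (t : ℝ) (p : ℝ × ℝ) : ℝ × ℝ :=
  (p.1 * Real.exp (∫ u in p.2..(p.2 + t), ρ u), p.2 + t)

/-- The complex observable `b_{m,n}(x,s) = x^m exp(−m ∫₀^s (ρ(u) − ρ*) du) exp(i n s)`. -/
noncomputable def bObs (ρ : ℝ → ℝ) (m : ℕ) (n : ℤ) (p : ℝ × ℝ) : ℂ :=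
  (p.1 : ℂ) ^ m * Complex.exp (-(m : ℂ) * ((∫ u in (0:ℝ)..p.2, (ρ u - rhoStar ρ)) : ℝ)) *
    Complex.exp (Complex.I * (n : ℂ) * (p.2 : ℂ))

/-- Each `b_{m,n}` is an eigenfunction of the Koopman semigroup of the flow `Φ`:
`b_{m,n} ∘ Φ_t = exp((m ρ* + i n) t) · b_{m,n}`. -/
theorem stmt13 (ρ : ℝ → ℝ) (hc : Continuous ρ)
    (hper : ∀ s, ρ (s + 2 * π) = ρ s) (m : ℕ) (n : ℤ) :
    ∀ (t : ℝ) (x s : ℝ),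
      bObs ρ m n (flowMap ρ t (x, s)) =
        Complex.exp (((m : ℂ) * (rhoStar ρ : ℂ) + Complex.I * (n : ℂ)) * (t : ℂ)) *
          bObs ρ m n (x, s) := by
  intro t x s
  have hInt : ∀ a b : ℝ, IntervalIntegrable (fun u => ρ u - rhoStar ρ) volume a b :=
    fun a b => (hc.sub continuous_const).intervalIntegrable a b
  have hsplit : (∫ u in (0:ℝ)..(s + t), (ρ u - rhoStar ρ))
      = (∫ u in (0:ℝ)..s, (ρ u - rhoStar ρ))
        + ((∫ u in s..(s + t), ρ u) - rhoStar ρ * t) := by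
    rw [← intervalIntegral.integral_add_adjacent_intervals (hInt 0 s) (hInt s (s + t))]
    congr 1
    rw [intervalIntegral.integral_sub (hc.intervalIntegrable _ _) intervalIntegrable_const,
        intervalIntegral.integral_const]
    simp only [smul_eq_mul]
    ring
  simp only [bObs, flowMap, hsplit]
  push_cast
  rw [mul_pow, ← Complex.exp_nat_mul]
  simp only [mul_assoc, ← Complex.exp_add]
  rw [mul_left_comm (Complex.exp _), ← Complex.exp_add]
  congr 1
  push_cast
  congr 1
  ring
end

section
/- For every K ∈ ℕ, the subspace V_K := span_ℂ { (x,s) ↦ x^k · exp(−k ξ(s)) · exp(i n s) : k ∈ ℕ, k ≤ K, n ∈ ℤ } of the functions ℝ² → ℂ is invariant under the Koopman semigroup of the flow Φ: for every t ∈ ℝ, if f ∈ V_K then f ∘ Φ_t ∈ V_K. -/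
open MeasureTheory Real

/-- `ξ(s) = ∫₀^s (ρ(u) − ρ*) du`. -/
noncomputable def xiFun (ρ : ℝ → ℝ) (s : ℝ) : ℝ := ∫ u in (0:ℝ)..s, (ρ u - rhoStar ρ)

lemma integral_eq_xi (ρ : ℝ → ℝ) (hc : Continuous ρ) (s t : ℝ) :
    (∫ u in s..(s + t), ρ u) = xiFun ρ (s + t) - xiFun ρ s + rhoStar ρ * t := by
  have h1 : xiFun ρ (s + t) - xiFun ρ s
      = ∫ u in s..(s + t), (ρ u - rhoStar ρ) := by
    rw [xiFun, xiFun]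
    exact intervalIntegral.integral_interval_sub_left
      ((hc.sub continuous_const).intervalIntegrable _ _)
      ((hc.sub continuous_const).intervalIntegrable _ _)
  have h2 : (∫ u in s..(s + t), (ρ u - rhoStar ρ))
      = (∫ u in s..(s + t), ρ u) - rhoStar ρ * t := by
    rw [intervalIntegral.integral_sub (hc.intervalIntegrable _ _)
      (intervalIntegrable_const), intervalIntegral.integral_const]
    simp [smul_eq_mul, mul_comm]
  rw [h1, h2]; ring

lemma exp_aux (X a b c d e f : ℂ) (h : a + b + c = d + e + f) :
    X * Complex.exp a * Complex.exp b * Complex.exp c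
      = Complex.exp d * (X * Complex.exp e * Complex.exp f) := by
  have l1 : X * Complex.exp a * Complex.exp b * Complex.exp c
      = X * Complex.exp (a + b + c) := by
    rw [Complex.exp_add, Complex.exp_add]; ring
  have l2 : Complex.exp d * (X * Complex.exp e * Complex.exp f)
      = X * Complex.exp (d + e + f) := by
    rw [Complex.exp_add, Complex.exp_add]; ring
  rw [l1, l2, h]

/-- For every `K`, the span `V_K` of the functions
`(x,s) ↦ x^k exp(−k ξ(s)) exp(i n s)` with `k ≤ K`, `n ∈ ℤ`, is invariant under the
Koopman semigroup `f ↦ f ∘ Φ_t` of the flow `Φ`. -/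
theorem stmt16 (ρ : ℝ → ℝ) (hc : Continuous ρ)
    (hper : ∀ s, ρ (s + 2 * π) = ρ s) (K : ℕ) :
    ∀ t : ℝ, ∀ f ∈ Submodule.span ℂ
        {f : ℝ × ℝ → ℂ | ∃ k : ℕ, k ≤ K ∧ ∃ n : ℤ, f = fun p =>
          (p.1 : ℂ) ^ k * Complex.exp (-(k : ℂ) * (xiFun ρ p.2 : ℂ)) *
            Complex.exp (Complex.I * (n : ℂ) * (p.2 : ℂ))},
      (fun p => f (flowMap ρ t p)) ∈ Submodule.span ℂ
        {f : ℝ × ℝ → ℂ | ∃ k : ℕ, k ≤ K ∧ ∃ n : ℤ, f = fun p =>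
          (p.1 : ℂ) ^ k * Complex.exp (-(k : ℂ) * (xiFun ρ p.2 : ℂ)) *
            Complex.exp (Complex.I * (n : ℂ) * (p.2 : ℂ))} := by
  intro t f hf
  induction hf using Submodule.span_induction with
  | mem g hg =>
      obtain ⟨k, hk, n, rfl⟩ := hg
      have hmem : (fun p : ℝ × ℝ =>
          (p.1 : ℂ) ^ k * Complex.exp (-(k : ℂ) * (xiFun ρ p.2 : ℂ)) *
            Complex.exp (Complex.I * (n : ℂ) * (p.2 : ℂ))) ∈
          Submodule.span ℂ
          {f : ℝ × ℝ → ℂ | ∃ k : ℕ, k ≤ K ∧ ∃ n : ℤ, f = fun p =>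
            (p.1 : ℂ) ^ k * Complex.exp (-(k : ℂ) * (xiFun ρ p.2 : ℂ)) *
              Complex.exp (Complex.I * (n : ℂ) * (p.2 : ℂ))} :=
        Submodule.subset_span ⟨k, hk, n, rfl⟩
      have key : (fun p : ℝ × ℝ =>
          ((flowMap ρ t p).1 : ℂ) ^ k *
            Complex.exp (-(k : ℂ) * (xiFun ρ (flowMap ρ t p).2 : ℂ)) *
            Complex.exp (Complex.I * (n : ℂ) * ((flowMap ρ t p).2 : ℂ)))
          = (Complex.exp ((k : ℂ) * (rhoStar ρ * t : ℝ) +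
              Complex.I * (n : ℂ) * (t : ℂ))) •
            (fun p : ℝ × ℝ =>
            (p.1 : ℂ) ^ k * Complex.exp (-(k : ℂ) * (xiFun ρ p.2 : ℂ)) *
              Complex.exp (Complex.I * (n : ℂ) * (p.2 : ℂ))) := by
        funext p
        obtain ⟨x, s⟩ := p
        simp only [flowMap, Pi.smul_apply, smul_eq_mul]
        rw [integral_eq_xi ρ hc s t]
        push_cast
        rw [mul_pow, ← Complex.exp_nat_mul]
        exact exp_aux _ _ _ _ _ _ _ (by push_cast; ring)
      exact key ▸ Submodule.smul_mem _ _ hmem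
  | zero => exact Submodule.zero_mem _
  | add g h _ _ hg hh => exact Submodule.add_mem _ hg hh
  | smul c g _ hg => exact Submodule.smul_mem _ c hg
end

section
/- (Generalized Laplace Analysis for the Koopman operator of a stable diagonalizable linear system, in the sequence-space model.) Let d ≥ 1 and λ : Fin d → ℂ with 0 < |λ_i| < 1 for all i. Let H := ℓ²(ℕ^d; ℂ) = lp (fun _ : (Fin d → ℕ) => ℂ) 2 and define M : H → H by (M a)(k) = (∏_i λ_i^{k_i}) · a(k). Then M is a well-defined continuous linear operator of norm at most 1. Fix a multi-index m : Fin d → ℕ and set μ := ∏_i λ_i^{m_i}. For a ∈ H let b ∈ H be given by b(k) = 0 if ∏_i |λ_i|^{k_i} > |μ| and b(k) = a(k) otherwise, and let P a ∈ H be given by (P a)(k) = a(k) if ∏_i λ_i^{k_i} = μ and (P a)(k) = 0 otherwise. Then for every a ∈ H the Laplace averages n⁻¹ ∑_{j=1}^{n} μ^{-j} (M^j b) converge in the norm of H to P a as n → ∞. -/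
open Filter
open Topology ENNReal


namespace Stmt17Aux

variable {ι : Type*}

lemma two_toReal : ((2 : ℝ≥0∞).toReal) = 2 := by simp

lemma memℓp_of_le {f g : ι → ℂ} (hg : Memℓp g 2) (h : ∀ i, ‖f i‖ ≤ ‖g i‖) :
    Memℓp f 2 := by
  apply memℓp_gen
  have h2 : (0:ℝ) < (2:ℝ≥0∞).toReal := by rw [two_toReal]; norm_num
  exact (hg.summable h2).of_nonneg_of_le
    (fun i => Real.rpow_nonneg (norm_nonneg _) _)
    (fun i => Real.rpow_le_rpow (norm_nonneg _) (h i) (by rw [two_toReal]; norm_num))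

lemma lp_norm_mono {f g : lp (fun _ : ι => ℂ) 2} (h : ∀ k, ‖f k‖ ≤ ‖g k‖) :
    ‖f‖ ≤ ‖g‖ := by
  have h2 : (0:ℝ) < (2:ℝ≥0∞).toReal := by rw [two_toReal]; norm_num
  refine lp.norm_le_of_tsum_le h2 (lp.norm_nonneg' g) ?_
  rw [lp.norm_rpow_eq_tsum h2 g]
  exact Summable.tsum_le_tsum
    (fun k => Real.rpow_le_rpow (norm_nonneg _) (h k) h2.le)
    ((lp.memℓp f).summable h2) ((lp.memℓp g).summable h2)

noncomputable def mulOp (w : ι → ℂ) (hw : ∀ k, ‖w k‖ ≤ 1) :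
    lp (fun _ : ι => ℂ) 2 →L[ℂ] lp (fun _ : ι => ℂ) 2 :=
  LinearMap.mkContinuous
    { toFun := fun a => ⟨fun k => w k * a k, memℓp_of_le (lp.memℓp a) (fun k => by
        rw [norm_mul]
        calc ‖w k‖ * ‖a k‖ ≤ 1 * ‖a k‖ := by gcongr; exact hw k
        _ = ‖a k‖ := one_mul _)⟩
      map_add' := fun a b => by
        apply lp.ext; funext k
        show w k * (a + b) k = _
        rw [lp.coeFn_add]
        show w k * (a k + b k) = (⟨_, _⟩ + ⟨_, _⟩ : lp (fun _ : ι => ℂ) 2) k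
        rw [lp.coeFn_add]
        show _ = w k * a k + w k * b k
        ring
      map_smul' := fun c a => by
        apply lp.ext; funext k
        show w k * (c • a) k = (c • (⟨_, _⟩ : lp (fun _ : ι => ℂ) 2)) k
        rw [lp.coeFn_smul, lp.coeFn_smul]
        show w k * (c * a k) = c * (w k * a k)
        ring }
    1
    (fun a => by
      rw [one_mul]
      exact lp_norm_mono (fun k => by
        show ‖w k * a k‖ ≤ ‖a k‖
        rw [norm_mul]
        calc ‖w k‖ * ‖a k‖ ≤ 1 * ‖a k‖ := by gcongr; exact hw k
        _ = ‖a k‖ := one_mul _))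

@[simp] lemma mulOp_apply (w : ι → ℂ) (hw : ∀ k, ‖w k‖ ≤ 1)
    (a : lp (fun _ : ι => ℂ) 2) (k : ι) : mulOp w hw a k = w k * a k := rfl

lemma mulOp_norm_le (w : ι → ℂ) (hw : ∀ k, ‖w k‖ ≤ 1) : ‖mulOp w hw‖ ≤ 1 :=
  LinearMap.mkContinuous_norm_le _ zero_le_one _

lemma mulOp_pow_apply (w : ι → ℂ) (hw : ∀ k, ‖w k‖ ≤ 1)
    (j : ℕ) (a : lp (fun _ : ι => ℂ) 2) (k : ι) :
    ((mulOp w hw ^ j) a) k = w k ^ j * a k := by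
  induction j generalizing a with
  | zero => simp
  | succ n ih =>
    rw [pow_succ]
    show ((mulOp w hw ^ n) (mulOp w hw a)) k = _
    rw [ih, mulOp_apply]
    ring


lemma cesaro_geom {z : ℂ} (hz : ‖z‖ ≤ 1) (hz1 : z ≠ 1) :
    Tendsto (fun n : ℕ => ((n:ℂ))⁻¹ * ∑ j ∈ Finset.Icc 1 n, z ^ j) atTop (𝓝 0) := by
  have h1 : z - 1 ≠ 0 := sub_ne_zero.mpr hz1
  have h1' : (0:ℝ) < ‖z - 1‖ := norm_pos_iff.mpr h1
  set C : ℝ := 2 / ‖z - 1‖ with hCdef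
  have hC : 0 ≤ C := by positivity
  have hb : ∀ n : ℕ, ‖∑ j ∈ Finset.Icc 1 n, z ^ j‖ ≤ C := by
    intro n
    have hgeom : ∑ j ∈ Finset.Icc 1 n, z ^ j = z * ((z ^ n - 1) / (z - 1)) := by
      rw [← Finset.Ico_add_one_right_eq_Icc, Finset.sum_Ico_eq_sum_range]
      simp only [Nat.add_sub_cancel]
      rw [← geom_sum_eq hz1 n, Finset.mul_sum]
      exact Finset.sum_congr rfl fun j _ => by rw [pow_add, pow_one]
    rw [hgeom, norm_mul, norm_div]
    calc ‖z‖ * (‖z ^ n - 1‖ / ‖z - 1‖) ≤ 1 * ((‖z ^ n‖ + ‖(1:ℂ)‖) / ‖z - 1‖) := by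
          gcongr
          exact norm_sub_le _ _
      _ ≤ 1 * ((1 + 1) / ‖z - 1‖) := by
          gcongr
          · rw [norm_pow]; exact pow_le_one₀ (norm_nonneg _) hz
          · rw [norm_one]
      _ = C := by rw [hCdef]; ring
  apply squeeze_zero_norm (a := fun n : ℕ => (n:ℝ)⁻¹ * C)
  · intro n
    rw [norm_mul, norm_inv, Complex.norm_natCast]
    gcongr
    exact hb n
  · have := tendsto_one_div_atTop_nhds_zero_nat.mul_const C
    simpa [one_div] using this


end Stmt17Aux


/-- Generalized Laplace Analysis for the Koopman operator of a stable diagonalizable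
linear system, in the sequence-space model `H = ℓ²(ℕ^d; ℂ)`.  The multiplication
operator `M` by `k ↦ ∏_i λ_i^{k_i}` is a well-defined continuous linear operator of norm
at most `1`, and for every `a ∈ H` the Laplace averages `n⁻¹ ∑_{j=1}^n μ^{-j} M^j b`
(where `μ = ∏_i λ_i^{m_i}` and `b` is `a` with the coordinates of modulus `> |μ|` removed)
converge in norm to the spectral projection `P a` of `a` onto the eigenspace at `μ`. -/
theorem stmt17 (d : ℕ) (hd : 1 ≤ d) (lam : Fin d → ℂ)
    (hlam : ∀ i, 0 < ‖lam i‖ ∧ ‖lam i‖ < 1)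
    (m : Fin d → ℕ) :
    ∃ M : lp (fun _ : (Fin d → ℕ) => ℂ) 2 →L[ℂ] lp (fun _ : (Fin d → ℕ) => ℂ) 2,
      (∀ (a : lp (fun _ : (Fin d → ℕ) => ℂ) 2) (k : Fin d → ℕ),
        M a k = (∏ i, lam i ^ k i) * a k) ∧
      ‖M‖ ≤ 1 ∧
      ∀ a : lp (fun _ : (Fin d → ℕ) => ℂ) 2,
        ∃ b Pa : lp (fun _ : (Fin d → ℕ) => ℂ) 2,
          (∀ k : Fin d → ℕ,
            (‖∏ i, lam i ^ m i‖ < ∏ i, ‖lam i‖ ^ k i → b k = 0) ∧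
            (¬ ‖∏ i, lam i ^ m i‖ < ∏ i, ‖lam i‖ ^ k i →
              b k = a k)) ∧
          (∀ k : Fin d → ℕ,
            ((∏ i, lam i ^ k i) = ∏ i, lam i ^ m i → Pa k = a k) ∧
            ((∏ i, lam i ^ k i) ≠ ∏ i, lam i ^ m i → Pa k = 0)) ∧
          Tendsto
            (fun n : ℕ => ((n : ℂ))⁻¹ •
              ∑ j ∈ Finset.Icc 1 n, ((∏ i, lam i ^ m i)⁻¹) ^ j • (M ^ j) b)
            atTop (nhds Pa) := by
  classical
  have h2 : (0:ℝ) < ((2:ℝ≥0∞)).toReal := by norm_num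
  set w : (Fin d → ℕ) → ℂ := fun k => ∏ i, lam i ^ k i with hw_def
  have hnormw : ∀ k, ‖w k‖ = ∏ i, ‖lam i‖ ^ k i := by
    intro k
    simp only [hw_def, norm_prod, norm_pow]
  have hw1 : ∀ k, ‖w k‖ ≤ 1 := by
    intro k
    rw [hnormw]
    apply Finset.prod_le_one
    · intro i _; positivity
    · intro i _; exact pow_le_one₀ (norm_nonneg _) (hlam i).2.le
  refine ⟨Stmt17Aux.mulOp w hw1, fun a k => rfl, Stmt17Aux.mulOp_norm_le w hw1, ?_⟩
  intro a
  set μ : ℂ := ∏ i, lam i ^ m i with hμ_def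
  have hμ0 : μ ≠ 0 := by
    rw [hμ_def]
    apply Finset.prod_ne_zero_iff.mpr
    intro i _
    apply pow_ne_zero
    intro h
    have := (hlam i).1
    rw [h] at this
    simp at this
  set bf : (Fin d → ℕ) → ℂ := fun k =>
    if ‖μ‖ < ∏ i, ‖lam i‖ ^ k i then 0 else a k with hbf_def
  have hbf_le : ∀ k, ‖bf k‖ ≤ ‖a k‖ := by
    intro k
    simp only [hbf_def]
    split <;> simp
  set Paf : (Fin d → ℕ) → ℂ := fun k => if w k = μ then a k else 0 with hPaf_def
  have hPaf_le : ∀ k, ‖Paf k‖ ≤ ‖a k‖ := by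
    intro k
    simp only [hPaf_def]
    split <;> simp
  set b : lp (fun _ : (Fin d → ℕ) => ℂ) 2 :=
    ⟨bf, Stmt17Aux.memℓp_of_le (lp.memℓp a) hbf_le⟩ with hb_def
  set Pa : lp (fun _ : (Fin d → ℕ) => ℂ) 2 :=
    ⟨Paf, Stmt17Aux.memℓp_of_le (lp.memℓp a) hPaf_le⟩ with hPa_def
  have hbcoe : ∀ k, b k = bf k := fun _ => rfl
  have hPacoe : ∀ k, Pa k = Paf k := fun _ => rfl
  refine ⟨b, Pa, ?_, ?_, ?_⟩
  · intro k
    constructor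
    · intro h
      rw [hbcoe]
      simp only [hbf_def]
      rw [if_pos h]
    · intro h
      rw [hbcoe]
      simp only [hbf_def]
      rw [if_neg h]
  · intro k
    constructor
    · intro h
      rw [hPacoe]
      simp only [hPaf_def]
      rw [if_pos h]
    · intro h
      rw [hPacoe]
      simp only [hPaf_def]
      rw [if_neg h]
  · -- the convergence
    set M := Stmt17Aux.mulOp w hw1 with hM_def
    set S : ℕ → lp (fun _ : (Fin d → ℕ) => ℂ) 2 :=
      fun n => ((n : ℂ))⁻¹ • ∑ j ∈ Finset.Icc 1 n, (μ⁻¹) ^ j • (M ^ j) b with hS_def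
    show Tendsto S atTop (nhds Pa)
    have hScoord : ∀ (n : ℕ) (k : Fin d → ℕ),
        S n k = ((n:ℂ)⁻¹ * ∑ j ∈ Finset.Icc 1 n, (μ⁻¹ * w k) ^ j) * bf k := by
      intro n k
      rw [hS_def]
      simp only []
      rw [lp.coeFn_smul, Pi.smul_apply, lp.coeFn_sum, Finset.sum_apply]
      simp only [hM_def, lp.coeFn_smul, Pi.smul_apply, smul_eq_mul, Stmt17Aux.mulOp_pow_apply]
      rw [mul_assoc, Finset.sum_mul]
      congr 1
      refine Finset.sum_congr rfl fun j _ => ?_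
      rw [mul_pow]
      ring
    -- pointwise convergence
    have hpt : ∀ k, Tendsto (fun n : ℕ => S n k - Paf k) atTop (𝓝 0) := by
      intro k
      have hSk : ∀ n, S n k = ((n:ℂ)⁻¹ * ∑ j ∈ Finset.Icc 1 n, (μ⁻¹ * w k) ^ j) * bf k :=
        fun n => hScoord n k
      by_cases hcase : ‖μ‖ < ∏ i, ‖lam i‖ ^ k i
      · have hb0 : bf k = 0 := by simp only [hbf_def]; rw [if_pos hcase]
        have hPa0 : Paf k = 0 := by
          simp only [hPaf_def]
          rw [if_neg]
          intro he
          rw [← hnormw, he] at hcase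
          exact lt_irrefl _ hcase
        simp only [hSk, hb0, hPa0, mul_zero, sub_zero]
        exact tendsto_const_nhds
      · have hble : ‖w k‖ ≤ ‖μ‖ := by
          rw [hnormw]
          exact not_lt.mp hcase
        have hbk : bf k = a k := by simp only [hbf_def]; rw [if_neg hcase]
        by_cases heq : w k = μ
        · have hz : μ⁻¹ * w k = 1 := by rw [heq]; exact inv_mul_cancel₀ hμ0
          have hPa1 : Paf k = a k := by simp only [hPaf_def]; rw [if_pos heq]
          apply Tendsto.congr' ?_ (tendsto_const_nhds (x := (0:ℂ)))
          filter_upwards [eventually_ge_atTop 1] with n hn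
          have hn0 : (n:ℂ) ≠ 0 := by
            exact_mod_cast Nat.cast_ne_zero.mpr (by omega)
          rw [hSk, hz, hPa1, hbk]
          simp only [one_pow, Finset.sum_const, Nat.card_Icc, Nat.add_sub_cancel,
            nsmul_eq_mul, mul_one]
          rw [inv_mul_cancel₀ hn0, one_mul, sub_self]
        · have hz1 : μ⁻¹ * w k ≠ 1 := by
            intro h
            apply heq
            calc w k = μ * (μ⁻¹ * w k) := by field_simp
              _ = μ := by rw [h, mul_one]
          have hznorm : ‖μ⁻¹ * w k‖ ≤ 1 := by
            have hμpos : (0:ℝ) < ‖μ‖ := norm_pos_iff.mpr hμ0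
            rw [norm_mul, norm_inv]
            calc ‖μ‖⁻¹ * ‖w k‖ ≤ ‖μ‖⁻¹ * ‖μ‖ := by gcongr
              _ = 1 := inv_mul_cancel₀ hμpos.ne'
          have hPa0 : Paf k = 0 := by simp only [hPaf_def]; rw [if_neg heq]
          have := (Stmt17Aux.cesaro_geom hznorm hz1).mul_const (bf k)
          rw [zero_mul] at this
          refine this.congr fun n => ?_
          rw [hSk, hPa0, sub_zero]
      -- end hpt
    -- uniform bound
    have hbound : ∀ (n : ℕ) (k : Fin d → ℕ), ‖S n k - Paf k‖ ≤ 2 * ‖a k‖ := by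
      intro n k
      have hSk := hScoord n k
      have hX : ‖(n:ℂ)⁻¹ * ∑ j ∈ Finset.Icc 1 n, (μ⁻¹ * w k) ^ j‖ * ‖bf k‖ ≤ ‖a k‖ := by
        by_cases hcase : ‖μ‖ < ∏ i, ‖lam i‖ ^ k i
        · have hb0 : bf k = 0 := by simp only [hbf_def]; rw [if_pos hcase]
          simp [hb0]
        · have hble : ‖w k‖ ≤ ‖μ‖ := by
            rw [hnormw]
            exact not_lt.mp hcase
          have hμpos : (0:ℝ) < ‖μ‖ := norm_pos_iff.mpr hμ0
          have hznorm : ‖μ⁻¹ * w k‖ ≤ 1 := by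
            rw [norm_mul, norm_inv]
            calc ‖μ‖⁻¹ * ‖w k‖ ≤ ‖μ‖⁻¹ * ‖μ‖ := by gcongr
              _ = 1 := inv_mul_cancel₀ hμpos.ne'
          have hsum : ‖∑ j ∈ Finset.Icc 1 n, (μ⁻¹ * w k) ^ j‖ ≤ (n:ℝ) := by
            calc ‖∑ j ∈ Finset.Icc 1 n, (μ⁻¹ * w k) ^ j‖
                ≤ ∑ j ∈ Finset.Icc 1 n, ‖(μ⁻¹ * w k) ^ j‖ := norm_sum_le _ _
              _ ≤ ∑ _j ∈ Finset.Icc 1 n, (1:ℝ) := by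
                  refine Finset.sum_le_sum fun j _ => ?_
                  rw [norm_pow]
                  exact pow_le_one₀ (norm_nonneg _) hznorm
              _ = (n:ℝ) := by simp
          have hXle : ‖(n:ℂ)⁻¹ * ∑ j ∈ Finset.Icc 1 n, (μ⁻¹ * w k) ^ j‖ ≤ 1 := by
            rw [norm_mul, norm_inv, Complex.norm_natCast]
            rcases Nat.eq_zero_or_pos n with rfl | hn
            · simp
            · have hnpos : (0:ℝ) < (n:ℝ) := by exact_mod_cast hn
              calc (n:ℝ)⁻¹ * ‖∑ j ∈ Finset.Icc 1 n, (μ⁻¹ * w k) ^ j‖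
                  ≤ (n:ℝ)⁻¹ * (n:ℝ) := by gcongr
                _ = 1 := inv_mul_cancel₀ hnpos.ne'
          calc ‖(n:ℂ)⁻¹ * ∑ j ∈ Finset.Icc 1 n, (μ⁻¹ * w k) ^ j‖ * ‖bf k‖
              ≤ 1 * ‖a k‖ := by
                apply mul_le_mul hXle (hbf_le k) (norm_nonneg _) zero_le_one
            _ = ‖a k‖ := one_mul _
      calc ‖S n k - Paf k‖ ≤ ‖S n k‖ + ‖Paf k‖ := norm_sub_le _ _
        _ ≤ ‖a k‖ + ‖a k‖ := by
            apply add_le_add ?_ (hPaf_le k)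
            rw [hSk, norm_mul]
            exact hX
        _ = 2 * ‖a k‖ := by ring
    -- tsum convergence
    have hsub : ∀ (n : ℕ) (k : Fin d → ℕ), (S n - Pa) k = S n k - Paf k := by
      intro n k
      rw [lp.coeFn_sub, Pi.sub_apply, hPacoe]
    have hconv : ∀ x : ℝ, x ^ ((2:ℝ≥0∞)).toReal = x ^ (2:ℕ) := by
      intro x
      rw [show ((2:ℝ≥0∞)).toReal = ((2:ℕ):ℝ) by norm_num, Real.rpow_natCast]
    have hsummable : Summable (fun k : Fin d → ℕ => (2 * ‖a k‖) ^ (2:ℕ)) := by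
      have := (lp.memℓp a).summable h2
      have h4 : Summable (fun k : Fin d → ℕ => ‖a k‖ ^ (2:ℕ)) := by
        refine this.congr fun k => ?_
        rw [hconv]
      have := h4.mul_left 4
      refine this.congr fun k => ?_
      ring
    have hts : Tendsto (fun n => ∑' k : Fin d → ℕ, ‖(S n - Pa) k‖ ^ (2:ℕ)) atTop
        (𝓝 0) := by
      have h0 : (0:ℝ) = ∑' _k : Fin d → ℕ, (0:ℝ) := by simp
      rw [h0]
      apply tendsto_tsum_of_dominated_convergence
        (bound := fun k : Fin d → ℕ => (2 * ‖a k‖) ^ (2:ℕ)) hsummable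
      · intro k
        have h := hpt k
        have hn : Tendsto (fun n => ‖S n k - Paf k‖) atTop (𝓝 0) := by
          have h' := h.norm
          rwa [norm_zero] at h'
        have h4 := hn.pow 2
        rw [show ((0:ℝ) ^ (2:ℕ)) = 0 by norm_num] at h4
        exact h4.congr fun n => by rw [hsub n k]
      · filter_upwards with n k
        rw [Real.norm_eq_abs, abs_of_nonneg (by positivity)]
        rw [hsub n k]
        exact pow_le_pow_left₀ (norm_nonneg _) (hbound n k) 2
    have hnorm2 : ∀ n, ‖S n - Pa‖ ^ (2:ℕ) = ∑' k : Fin d → ℕ, ‖(S n - Pa) k‖ ^ (2:ℕ) := by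
      intro n
      have := lp.norm_rpow_eq_tsum h2 (S n - Pa)
      rw [hconv] at this
      rw [this]
      exact tsum_congr fun k => by rw [hconv]
    have hnormt : Tendsto (fun n => ‖S n - Pa‖) atTop (𝓝 0) := by
      have hsq : Tendsto (fun n => ‖S n - Pa‖ ^ (2:ℕ)) atTop (𝓝 0) := by
        refine hts.congr fun n => (hnorm2 n).symm
      have hcont : Tendsto Real.sqrt (𝓝 0) (𝓝 0) := by
        simpa using Real.continuous_sqrt.tendsto 0
      have h5 := hcont.comp hsq
      refine h5.congr fun n => ?_
      show Real.sqrt (‖S n - Pa‖ ^ (2:ℕ)) = ‖S n - Pa‖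
      rw [Real.sqrt_sq (norm_nonneg _)]
    rw [show nhds Pa = 𝓝 Pa from rfl]
    have := tendsto_iff_norm_sub_tendsto_zero.mpr hnormt
    exact this
end
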